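/- Let μ, ν be probability measures on a countable space, f ≥ 0 with μ[f] < ∞, and g a bounded function. Then for every s > 0: |μ[f; g]| ≤ (μ[f]/s) · log( max( μ[e^{s(g−μ[g])}], μ[e^{−s(g−μ[g])}] ) ) + (1/s) H(f|μ), where μ[f;g] = μ[fg] − μ[f]μ[g] and H(f|μ) = μ[f log f] − μ[f] log μ[f]. -/

import Mathlib

open MeasureTheory Real

/-- Young-type inequality: `a * t ≤ a * log a - a + exp t` for `a ≥ 0`. -/
lemma aux_young (a t : ℝ) (ha : 0 ≤ a) : a * t ≤ a * Real.log a - a + Real.exp t := by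
  rcases eq_or_lt_of_le ha with h | h
  · simp [← h, Real.exp_pos t |>.le]
  · have h1 : t - Real.log a + 1 ≤ Real.exp (t - Real.log a) := Real.add_one_le_exp _
    have h2 : a * Real.exp (t - Real.log a) = Real.exp t := by
      rw [Real.exp_sub, Real.exp_log h]
      field_simp
    nlinarith [mul_le_mul_of_nonneg_left h1 ha]

/-- Key entropy inequality (variational formula):
`∫ f h ≤ (∫ f) * log (∫ exp h) + H(f|μ)` for bounded `h`. -/
lemma aux_key {X : Type*} [MeasurableSpace X] [MeasurableSingletonClass X] [Countable X]
    (μ : Measure X) [IsProbabilityMeasure μ]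
    (f h : X → ℝ) (hf0 : ∀ x, 0 ≤ f x)
    (hfi : Integrable f μ)
    (hfl : Integrable (fun x => f x * log (f x)) μ)
    (C : ℝ) (hb : ∀ x, |h x| ≤ C) :
    ∫ x, f x * h x ∂μ
      ≤ (∫ x, f x ∂μ) * log (∫ x, exp (h x) ∂μ)
        + ((∫ x, f x * log (f x) ∂μ) - (∫ x, f x ∂μ) * log (∫ x, f x ∂μ)) := by
  set m := ∫ x, f x ∂μ with hm
  have hfm : ∀ (u : X → ℝ), AEStronglyMeasurable u μ :=
    fun u => (measurable_of_countable u).aestronglyMeasurable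
  -- integrability of exp ∘ h
  have hexp : Integrable (fun x => exp (h x)) μ := by
    refine (integrable_const (Real.exp C)).mono' (hfm _) ?_
    filter_upwards with x
    rw [Real.norm_eq_abs, abs_of_pos (Real.exp_pos _)]
    exact Real.exp_le_exp.mpr ((abs_le.mp (hb x)).2)
  -- integrability of f * bounded
  have hfh : ∀ (u : X → ℝ) (D : ℝ), (∀ x, |u x| ≤ D) →
      Integrable (fun x => f x * u x) μ := by
    intro u D hD
    have : Integrable (fun x => u x * f x) μ := by
      refine hfi.bdd_mul (c := D) (hfm _) ?_
      filter_upwards with x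
      simpa [Real.norm_eq_abs] using hD x
    simpa [mul_comm] using this
  have hfhC : Integrable (fun x => f x * h x) μ := hfh h C hb
  set Z := ∫ x, exp (h x) ∂μ with hZ
  have hZpos : 0 < Z := by
    have h1 : Real.exp (-C) ≤ Z := by
      calc Real.exp (-C) = ∫ _ : X, Real.exp (-C) ∂μ := by simp
        _ ≤ Z := by
          refine integral_mono (integrable_const _) hexp fun x => ?_
          exact Real.exp_le_exp.mpr (neg_le_of_abs_le (hb x))
    exact lt_of_lt_of_le (Real.exp_pos _) h1
  have hm0 : 0 ≤ m := integral_nonneg hf0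
  rcases eq_or_lt_of_le hm0 with hmz | hmpos
  · -- m = 0 : f = 0 a.e.
    have hfz : f =ᵐ[μ] 0 := by
      rw [← integral_eq_zero_iff_of_nonneg hf0 hfi]
      exact hmz.symm
    have h1 : ∫ x, f x * h x ∂μ = 0 := by
      rw [integral_congr_ae (g := fun _ => (0:ℝ))]
      · simp
      · filter_upwards [hfz] with x hx; simp [hx]
    have h2 : ∫ x, f x * log (f x) ∂μ = 0 := by
      rw [integral_congr_ae (g := fun _ => (0:ℝ))]
      · simp
      · filter_upwards [hfz] with x hx; simp [hx]
    rw [h1, h2, ← hmz]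
    simp
  · -- m > 0
    set K := Real.log m - Real.log Z with hK
    have hptw : ∀ x, f x * (h x + K) ≤ f x * log (f x) - f x + exp (h x + K) :=
      fun x => aux_young (f x) (h x + K) (hf0 x)
    have hintL : Integrable (fun x => f x * (h x + K)) μ := by
      refine hfh _ (C + |K|) fun x => ?_
      exact (abs_add_le _ _).trans (add_le_add_left (hb x) _)
    have hexpK : Integrable (fun x => exp (h x + K)) μ := by
      simpa [Real.exp_add, mul_comm] using hexp.const_mul (Real.exp K)
    have hintR : Integrable (fun x => f x * log (f x) - f x + exp (h x + K)) μ :=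
      (hfl.sub hfi).add hexpK
    have hmono : ∫ x, f x * (h x + K) ∂μ
        ≤ ∫ x, (f x * log (f x) - f x + exp (h x + K)) ∂μ :=
      integral_mono hintL hintR hptw
    have hL : ∫ x, f x * (h x + K) ∂μ = (∫ x, f x * h x ∂μ) + K * m := by
      have : ∀ x, f x * (h x + K) = f x * h x + K * f x := fun x => by ring
      simp_rw [this]
      rw [integral_add hfhC (hfi.const_mul K), integral_const_mul]
    have hExpInt : ∫ x, exp (h x + K) ∂μ = m := by
      simp_rw [Real.exp_add]
      rw [integral_mul_const, hK, Real.exp_sub, Real.exp_log hmpos,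
        Real.exp_log hZpos]
      field_simp
      rfl
    have hR : ∫ x, (f x * log (f x) - f x + exp (h x + K)) ∂μ
        = ∫ x, f x * log (f x) ∂μ := by
      have e1 : ∫ x, (f x * log (f x) - f x + exp (h x + K)) ∂μ
          = (∫ x, (f x * log (f x) - f x) ∂μ) + ∫ x, exp (h x + K) ∂μ :=
        integral_add (hfl.sub hfi) hexpK
      have e2 : ∫ x, (f x * log (f x) - f x) ∂μ
          = (∫ x, f x * log (f x) ∂μ) - ∫ x, f x ∂μ := integral_sub hfl hfi
      rw [e1, e2, hExpInt, ← hm]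
      ring
    rw [hL, hR] at hmono
    have : K * m = m * Real.log m - m * Real.log Z := by rw [hK]; ring
    linarith

theorem stmt13 {X : Type*} [MeasurableSpace X] [MeasurableSingletonClass X] [Countable X]
    (μ : Measure X) [IsProbabilityMeasure μ]
    (f g : X → ℝ) (hf0 : ∀ x, 0 ≤ f x)
    (hfi : Integrable f μ)
    (hfl : Integrable (fun x => f x * log (f x)) μ)
    (hgm : Measurable g) (M : ℝ) (hgb : ∀ x, |g x| ≤ M)
    (s : ℝ) (hs : 0 < s) :
    |(∫ x, f x * g x ∂μ) - (∫ x, f x ∂μ) * ∫ x, g x ∂μ|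
      ≤ (∫ x, f x ∂μ) / s *
          log (max (∫ x, exp (s * (g x - ∫ y, g y ∂μ)) ∂μ)
                   (∫ x, exp (-s * (g x - ∫ y, g y ∂μ)) ∂μ))
        + (1 / s) * ((∫ x, f x * log (f x) ∂μ)
            - (∫ x, f x ∂μ) * log (∫ x, f x ∂μ)) := by
  set c := ∫ y, g y ∂μ with hc
  set m := ∫ x, f x ∂μ with hm
  set H := (∫ x, f x * log (f x) ∂μ) - m * log m with hH
  have hfm : ∀ (u : X → ℝ), AEStronglyMeasurable u μ :=
    fun u => (measurable_of_countable u).aestronglyMeasurable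
  have hm0 : 0 ≤ m := integral_nonneg hf0
  -- bound on |g x - c|
  have hgc : ∀ x, |g x - c| ≤ M + |c| := fun x =>
    (abs_sub _ _).trans (add_le_add_left (hgb x) _)
  have hb1 : ∀ x, |s * (g x - c)| ≤ s * (M + |c|) := fun x => by
    rw [abs_mul, abs_of_pos hs]
    exact mul_le_mul_of_nonneg_left (hgc x) hs.le
  have hb2 : ∀ x, |(-s) * (g x - c)| ≤ s * (M + |c|) := fun x => by
    rw [abs_mul, abs_neg, abs_of_pos hs]
    exact mul_le_mul_of_nonneg_left (hgc x) hs.le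
  set A := ∫ x, exp (s * (g x - c)) ∂μ with hA
  set B := ∫ x, exp (-s * (g x - c)) ∂μ with hB
  have key1 := aux_key μ f (fun x => s * (g x - c)) hf0 hfi hfl _ hb1
  have key2 := aux_key μ f (fun x => (-s) * (g x - c)) hf0 hfi hfl _ hb2
  -- positivity of A and B
  have hApos : 0 < A := by
    have h1 : Real.exp (-(s * (M + |c|))) ≤ A := by
      calc Real.exp (-(s * (M + |c|))) = ∫ _ : X, Real.exp (-(s * (M + |c|))) ∂μ := by simp
        _ ≤ A := by
          refine integral_mono (integrable_const _) ?_ fun x => ?_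
          · refine (integrable_const (Real.exp (s * (M + |c|)))).mono' (hfm _) ?_
            filter_upwards with x
            rw [Real.norm_eq_abs, abs_of_pos (Real.exp_pos _)]
            exact Real.exp_le_exp.mpr (abs_le.mp (hb1 x)).2
          · exact Real.exp_le_exp.mpr (neg_le_of_abs_le (hb1 x))
    exact lt_of_lt_of_le (Real.exp_pos _) h1
  have hBpos : 0 < B := by
    have h1 : Real.exp (-(s * (M + |c|))) ≤ B := by
      calc Real.exp (-(s * (M + |c|))) = ∫ _ : X, Real.exp (-(s * (M + |c|))) ∂μ := by simp
        _ ≤ B := by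
          refine integral_mono (integrable_const _) ?_ fun x => ?_
          · refine (integrable_const (Real.exp (s * (M + |c|)))).mono' (hfm _) ?_
            filter_upwards with x
            rw [Real.norm_eq_abs, abs_of_pos (Real.exp_pos _)]
            exact Real.exp_le_exp.mpr (abs_le.mp (hb2 x)).2
          · exact Real.exp_le_exp.mpr (neg_le_of_abs_le (hb2 x))
    exact lt_of_lt_of_le (Real.exp_pos _) h1
  have hlogA : log A ≤ log (max A B) := Real.log_le_log hApos (le_max_left _ _)
  have hlogB : log B ≤ log (max A B) := Real.log_le_log hBpos (le_max_right _ _)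
  -- compute the integrals of f * (±s * (g - c))
  have hfg : Integrable (fun x => f x * g x) μ := by
    have : Integrable (fun x => g x * f x) μ := by
      refine hfi.bdd_mul (c := M) (hfm _) ?_
      filter_upwards with x
      simpa [Real.norm_eq_abs] using hgb x
    simpa [mul_comm] using this
  have hfgc : ∫ x, f x * (g x - c) ∂μ = (∫ x, f x * g x ∂μ) - m * c := by
    have : ∀ x, f x * (g x - c) = f x * g x - c * f x := fun x => by ring
    simp_rw [this]
    rw [integral_sub hfg (hfi.const_mul c), integral_const_mul, ← hm]
    ring
  have h1 : ∫ x, f x * (s * (g x - c)) ∂μ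
      = s * ((∫ x, f x * g x ∂μ) - m * c) := by
    have : ∀ x, f x * (s * (g x - c)) = s * (f x * (g x - c)) := fun x => by ring
    simp_rw [this]
    rw [integral_const_mul, hfgc]
  have h2 : ∫ x, f x * ((-s) * (g x - c)) ∂μ
      = -s * ((∫ x, f x * g x ∂μ) - m * c) := by
    have : ∀ x, f x * ((-s) * (g x - c)) = (-s) * (f x * (g x - c)) := fun x => by ring
    simp_rw [this]
    rw [integral_const_mul, hfgc]
  rw [← hm, ← hA] at key1
  rw [← hm, ← hB] at key2
  rw [← hH] at key1 key2
  rw [h1] at key1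
  rw [h2] at key2
  set D := (∫ x, f x * g x ∂μ) - m * c with hD
  have hub1 : s * D ≤ m * log (max A B) + H := by
    have h3 := mul_le_mul_of_nonneg_left hlogA hm0
    linarith
  have hub2 : -(s * D) ≤ m * log (max A B) + H := by
    have h3 := mul_le_mul_of_nonneg_left hlogB hm0
    linarith
  rw [abs_le]
  have heq : m / s * log (max A B) + 1 / s * H
      = (m * log (max A B) + H) / s := by field_simp
  constructor
  · have h' : -D ≤ (m * log (max A B) + H) / s := (le_div_iff₀ hs).mpr (by linarith)
    linarith
  · have h' : D ≤ (m * log (max A B) + H) / s := (le_div_iff₀ hs).mpr (by linarith)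
    linarith
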